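/- For any symmetric positive semidefinite initial value P₀ ∈ ℝ^{n×n} and B ∈ ℝ^{n×m}, the matrix ODE Ṗ(t) = -P(t) B Bᵀ P(t), P(0) = P₀, has the exact solution P(t) = P₀ (I + t B Bᵀ P₀)⁻¹ for all t ≥ 0, and I + t B Bᵀ P₀ is invertible for all t ≥ 0. -/

import Mathlib

open Matrix

attribute [local instance] Matrix.normedAddCommGroup Matrix.normedSpace

private lemma isUnit_one_add_mul_swap {R : Type*} [Ring R] {a b : R}
    (h : IsUnit (1 + b * a)) : IsUnit (1 + a * b) := by
  obtain ⟨u, hu⟩ := h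
  have h1 : (1 + b * a) * ↑u⁻¹ = 1 := by rw [← hu]; exact u.mul_inv
  have h2 : (↑u⁻¹ : R) * (1 + b * a) = 1 := by rw [← hu]; exact u.inv_mul
  refine isUnit_iff_exists.mpr ⟨1 - a * ↑u⁻¹ * b, ?_, ?_⟩
  · have e1 : (1 + a * b) * (1 - a * ↑u⁻¹ * b)
        = 1 + a * b - a * ((1 + b * a) * ↑u⁻¹) * b := by noncomm_ring
    rw [h1] at e1
    simpa using e1
  · have e2 : (1 - a * ↑u⁻¹ * b) * (1 + a * b)
        = 1 + a * b - a * (↑u⁻¹ * (1 + b * a)) * b := by noncomm_ring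
    rw [h2] at e2
    simpa using e2

private lemma posSemidef_smul_nonneg {k : ℕ} {N : Matrix (Fin k) (Fin k) ℝ}
    (h : N.PosSemidef) {c : ℝ} (hc : 0 ≤ c) : (c • N).PosSemidef := by
  have hH : (c • N).IsHermitian := by
    rw [Matrix.IsHermitian, conjTranspose_smul, h.1.eq]
    simp
  refine .of_dotProduct_mulVec_nonneg hH fun x => ?_
  have := h.dotProduct_mulVec_nonneg x
  simp only [smul_mulVec, dotProduct_smul, smul_eq_mul]
  exact mul_nonneg hc this

/-- The matrix ODE `Ṗ = -P B Bᵀ P`, `P(0) = P₀` with `P₀` symmetric positive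
semidefinite has the exact solution `P(t) = P₀ (I + t B Bᵀ P₀)⁻¹` for `t ≥ 0`,
and `I + t B Bᵀ P₀` is invertible for all `t ≥ 0`. -/
theorem quadratic_part_exact_solution (n m : ℕ)
    (P₀ : Matrix (Fin n) (Fin n) ℝ) (B : Matrix (Fin n) (Fin m) ℝ)
    (hP₀ : P₀.PosSemidef)
    (P : ℝ → Matrix (Fin n) (Fin n) ℝ)
    (hPdef : ∀ t : ℝ, P t = P₀ * (1 + t • (B * Bᵀ * P₀))⁻¹) :
    (∀ t : ℝ, 0 ≤ t → IsUnit (1 + t • (B * Bᵀ * P₀))) ∧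
    P 0 = P₀ ∧
    (∀ t : ℝ, 0 ≤ t → HasDerivAt P (-(P t * B * Bᵀ * P t)) t) := by
  set M : Matrix (Fin n) (Fin n) ℝ := B * Bᵀ * P₀ with hM
  obtain ⟨S, hSS, hSH⟩ : ∃ S : Matrix (Fin n) (Fin n) ℝ, S * S = P₀ ∧ Sᴴ = S :=
    open scoped MatrixOrder in
    ⟨CFC.sqrt P₀, CFC.sqrt_mul_sqrt_self P₀ hP₀.nonneg, (CFC.sqrt_nonneg P₀).posSemidef.1⟩
  -- Part 1 : invertibility
  have hUnit : ∀ t : ℝ, 0 ≤ t → IsUnit (1 + t • M) := by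
    intro t ht
    have hpsd : (S * B * Bᵀ * S).PosSemidef := by
      have := posSemidef_self_mul_conjTranspose (S * B)
      have hCT : (S * B)ᴴ = Bᵀ * S := by
        rw [conjTranspose_mul, hSH, conjTranspose_eq_transpose_of_trivial]
      rw [hCT] at this
      rw [Matrix.mul_assoc (S * B) Bᵀ S]
      exact this
    have hpd : Matrix.PosDef (1 + t • (S * B * Bᵀ * S)) :=
      Matrix.PosDef.add_posSemidef Matrix.PosDef.one (posSemidef_smul_nonneg hpsd ht)
    have hsw : IsUnit (1 + S * (t • (B * Bᵀ * S))) := by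
      have : S * (t • (B * Bᵀ * S)) = t • (S * B * Bᵀ * S) := by
        rw [Matrix.mul_smul]; congr 1; simp only [Matrix.mul_assoc]
      rw [this]
      exact hpd.isUnit
    have := isUnit_one_add_mul_swap hsw
    have heq : (t • (B * Bᵀ * S)) * S = t • M := by
      rw [Matrix.smul_mul]; congr 1; rw [hM, Matrix.mul_assoc, hSS]
    rwa [heq] at this
  refine ⟨hUnit, ?_, ?_⟩
  · rw [hPdef 0]
    simp
  -- Part 3 : the derivative
  intro t₀ ht₀
  set A : ℝ → Matrix (Fin n) (Fin n) ℝ := fun t => 1 + t • M with hA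
  have hdet0 : IsUnit (A t₀).det := (isUnit_iff_isUnit_det _).mp (hUnit t₀ ht₀)
  have hAcont : Continuous A := by
    apply continuous_const.add
    exact continuous_id.smul continuous_const
  have hdetcont : Continuous fun t => (A t).det := hAcont.matrix_det
  have hev : ∀ᶠ t in nhds t₀, IsUnit (A t).det := by
    have hne : (A t₀).det ≠ 0 := by
      intro h0
      rw [h0] at hdet0
      exact (not_isUnit_zero : ¬ IsUnit (0 : ℝ)) hdet0
    filter_upwards [hdetcont.continuousAt.eventually_ne hne] with t ht
    exact isUnit_iff_ne_zero.mpr ht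
  -- continuity of P at t₀
  have hInvCont : ContinuousAt (fun t => (A t)⁻¹) t₀ := by
    have h1 : ContinuousAt Ring.inverse (A t₀).det := by
      have := NormedRing.inverse_continuousAt hdet0.unit
      rwa [hdet0.unit_spec] at this
    exact (continuousAt_matrix_inv (A t₀) h1).comp hAcont.continuousAt
  have hPcont : ContinuousAt P t₀ := by
    have : ContinuousAt (fun t => P₀ * (A t)⁻¹) t₀ :=
      (continuous_const.matrix_mul continuous_id).continuousAt.comp hInvCont
    refine this.congr ?_
    filter_upwards with t
    rw [hPdef t]
  -- the slope computation
  refine hasDerivAt_iff_tendsto_slope.mpr ?_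
  have hslope : ∀ᶠ t in nhdsWithin t₀ {t₀}ᶜ,
      slope P t₀ t = -(P t * B * Bᵀ * P t₀) := by
    filter_upwards [hev.filter_mono nhdsWithin_le_nhds, self_mem_nhdsWithin] with t hdet hne
    have hne' : t ≠ t₀ := hne
    have hAt : (A t)⁻¹ * A t = 1 := nonsing_inv_mul _ hdet
    have hAt0 : A t₀ * (A t₀)⁻¹ = 1 := mul_nonsing_inv _ hdet0
    have hdiff : (A t)⁻¹ - (A t₀)⁻¹ = (A t)⁻¹ * (A t₀ - A t) * (A t₀)⁻¹ := by
      rw [Matrix.mul_sub, Matrix.sub_mul, Matrix.mul_assoc ((A t)⁻¹) (A t₀) ((A t₀)⁻¹),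
        hAt0, mul_one, hAt, one_mul]
    have hAsub : A t₀ - A t = (t₀ - t) • M := by
      simp only [hA, sub_smul]
      abel
    have hPt : P t - P t₀ = (t₀ - t) • (P t * (B * Bᵀ * P t₀)) := by
      rw [hPdef t, hPdef t₀, ← Matrix.mul_sub, hdiff, hAsub,
        Matrix.mul_smul, Matrix.smul_mul, Matrix.mul_smul]
      congr 1
      simp only [hA, hM, Matrix.mul_assoc]
    rw [slope_def_module, hPt, smul_smul]
    have hc : (t - t₀)⁻¹ * (t₀ - t) = -1 := by
      rw [← neg_sub t t₀, mul_neg, inv_mul_cancel₀ (sub_ne_zero.mpr hne')]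
    rw [hc]
    simp only [neg_smul, one_smul, Matrix.mul_assoc]
  refine Filter.Tendsto.congr' (Filter.EventuallyEq.symm hslope) ?_
  have hcont2 : ContinuousAt (fun t => -(P t * B * Bᵀ * P t₀)) t₀ := by
    have : Continuous fun X : Matrix (Fin n) (Fin n) ℝ => -(X * B * Bᵀ * P t₀) :=
      (((continuous_id.matrix_mul continuous_const).matrix_mul continuous_const).matrix_mul
        continuous_const).neg
    exact this.continuousAt.comp hPcont
  exact hcont2.tendsto.mono_left nhdsWithin_le_nhds
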